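/- arXiv:1103.2685 — 2 statements merged into one kernel-verified Lean document; each statement's English description precedes it below -/
import Mathlib

section
/- Let m, n ∈ ℕ with n > m ≥ 5 and (m-1) ∤ (n-2). If m+n-4 = (m-1)x + (m-2)y + 2(m-3)z for some nonnegative integers x, y, z, then r(T_m*, K_{1,n-1}) = m+n-3, assuming the upper bound r(T_m*, K_{1,n-1}) ≤ m+n-3. -/
open SimpleGraph

/-- `G` contains a copy of `H` as a subgraph. -/
def Contains {V W : Type*} (G : SimpleGraph V) (H : SimpleGraph W) : Prop :=
  ∃ f : W ↪ V, ∀ a b, H.Adj a b → G.Adj (f a) (f b)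

/-- The Turán number `ex(p; L)`: the maximum number of edges in a simple graph
on `p` vertices not containing `L` as a subgraph. -/
noncomputable def exNum (p : ℕ) {W : Type*} (L : SimpleGraph W) : ℕ :=
  sSup {k | ∃ G : SimpleGraph (Fin p), ¬ Contains G L ∧ G.edgeSet.ncard = k}

/-- The Ramsey number `r(G₁, G₂)`: the least positive `N` such that every graph on
`N` vertices contains `G₁` or its complement contains `G₂`. -/
noncomputable def ramsey {V W : Type*} (G₁ : SimpleGraph V) (G₂ : SimpleGraph W) : ℕ :=
  sInf {N | 0 < N ∧ ∀ G : SimpleGraph (Fin N), Contains G G₁ ∨ Contains Gᶜ G₂}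

/-- The tree `Tₙ*` on `n` vertices with edges `v₀v₁, …, v₀v_{n-3}, v_{n-3}v_{n-2},
v_{n-2}v_{n-1}`. -/
def Tstar (n : ℕ) : SimpleGraph (Fin n) :=
  SimpleGraph.fromRel (fun a b =>
    (a.val = 0 ∧ 1 ≤ b.val ∧ b.val ≤ n - 3) ∨ (a.val = n - 3 ∧ b.val = n - 2) ∨
      (a.val = n - 2 ∧ b.val = n - 1))

/-- The star `K_{1,n-1}` on `n` vertices with center `0`. -/
def starGraph (n : ℕ) : SimpleGraph (Fin n) :=
  SimpleGraph.fromRel (fun a _ => a.val = 0)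

/-! ### Auxiliary machinery for the lower bound construction -/

lemma injLe {p q : ℕ} (g : ℕ → ℕ) (hmem : ∀ t, t < p → g t < q)
    (hinj : ∀ t1, t1 < p → ∀ t2, t2 < p → g t1 = g t2 → t1 = t2) : p ≤ q := by
  have h := Finset.card_le_card_of_injOn g
    (s := Finset.range p) (t := Finset.range q)
    (fun a ha => Finset.mem_range.2 (hmem a (Finset.mem_range.1 ha)))
    (fun a ha b hb hab => hinj a (Finset.mem_range.1 ha) b (Finset.mem_range.1 hb) hab)
  simpa using h

lemma divMulAdd {k j t : ℕ} (hk : 0 < k) (ht : t < k) :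
    (j * k + t) / k = j ∧ (j * k + t) % k = t := by
  constructor
  · rw [mul_comm, Nat.mul_add_div hk, Nat.div_eq_of_lt ht, Nat.add_zero]
  · rw [mul_comm, Nat.mul_add_mod, Nat.mod_eq_of_lt ht]

/-- region of a vertex: 0 = cliques of size m-1, 1 = cliques of size m-2,
2 = complete bipartite blocks. -/
def regF (A B u : ℕ) : ℕ := if u < A then 0 else if u < A + B then 1 else 2

def blkF (m A B u : ℕ) : ℕ :=
  if u < A then u / (m - 1) else if u < A + B then (u - A) / (m - 2)
  else (u - A - B) / (2 * (m - 3))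

def sBF (m A B u : ℕ) : Prop := (u - A - B) % (2 * (m - 3)) < m - 3

def cAdj (m A B u v : ℕ) : Prop :=
  u ≠ v ∧ regF A B u = regF A B v ∧ blkF m A B u = blkF m A B v ∧
    (regF A B u ≠ 2 ∨ ¬ (sBF m A B u ↔ sBF m A B v))

lemma cAdj_symm {m A B u v : ℕ} (h : cAdj m A B u v) : cAdj m A B v u := by
  obtain ⟨h1, h2, h3, h4⟩ := h
  refine ⟨fun e => h1 e.symm, h2.symm, h3.symm, ?_⟩
  rcases h4 with h | h
  · left; rw [← h2]; exact h
  · right; intro hiff; exact h hiff.symm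

/-- The lower-bound construction graph. -/
def Gc (m A B N : ℕ) : SimpleGraph (Fin N) where
  Adj u v := cAdj m A B u.val v.val
  symm := ⟨fun _ _ h => cAdj_symm h⟩
  loopless := ⟨fun _ h => h.1 rfl⟩

lemma regF_eq_zero {A B u : ℕ} (h : regF A B u = 0) : u < A := by
  by_contra hn
  simp only [regF, if_neg hn] at h
  split_ifs at h <;> omega

lemma regF_eq_one {A B u : ℕ} (h : regF A B u = 1) : A ≤ u ∧ u < A + B := by
  by_contra hn
  simp only [regF] at h
  split_ifs at h <;> omega

lemma regF_eq_two {A B u : ℕ} (h : regF A B u = 2) : A + B ≤ u := by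
  by_contra hn
  simp only [regF] at h
  split_ifs at h <;> omega

lemma starCount {N n c : ℕ} (hn : 0 < n) (G : SimpleGraph (Fin N)) (f : Fin n ↪ Fin N)
    (hf : ∀ a b, (_root_.starGraph n).Adj a b → Gᶜ.Adj (f a) (f b))
    (gnb : ℕ → Fin N)
    (hadj : ∀ t, t < c → G.Adj (f ⟨0, hn⟩) (gnb t))
    (hginj : ∀ t1, t1 < c → ∀ t2, t2 < c → gnb t1 = gnb t2 → t1 = t2) :
    n - 1 + (c + 1) ≤ N := by
  classical
  set u := f ⟨0, hn⟩ with hu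
  have himg : ((Finset.range c).image gnb).card = c := by
    rw [Finset.card_image_of_injOn, Finset.card_range]
    intro t1 h1 t2 h2 he
    simp only [Finset.coe_range, Set.mem_Iio] at h1 h2
    exact hginj t1 h1 t2 h2 he
  have hunotmem : u ∉ (Finset.range c).image gnb := by
    intro hmem
    obtain ⟨t, ht, he⟩ := Finset.mem_image.1 hmem
    exact (G.ne_of_adj (hadj t (Finset.mem_range.1 ht))) he.symm
  set T : Finset (Fin N) := insert u ((Finset.range c).image gnb) with hT
  set S : Finset (Fin N) :=
    (Finset.range (n - 1)).image (fun i => if h : i + 1 < n then f ⟨i + 1, h⟩ else u) with hS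
  have hTcard : T.card = c + 1 := by
    rw [hT, Finset.card_insert_of_notMem hunotmem, himg]
  have hScard : S.card = n - 1 := by
    rw [hS, Finset.card_image_of_injOn, Finset.card_range]
    intro i1 h1 i2 h2 he
    simp only [Finset.coe_range, Set.mem_Iio] at h1 h2
    simp only [dif_pos (show i1 + 1 < n by omega), dif_pos (show i2 + 1 < n by omega)] at he
    have := congrArg Fin.val (f.injective he)
    simpa using this
  have hdisj : Disjoint S T := by
    rw [Finset.disjoint_left]
    intro v hvS hvT
    obtain ⟨i, hi, he⟩ := Finset.mem_image.1 hvS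
    rw [Finset.mem_range] at hi
    rw [dif_pos (show i + 1 < n by omega)] at he
    have hstar : (_root_.starGraph n).Adj ⟨0, hn⟩ ⟨i + 1, by omega⟩ := by
      rw [_root_.starGraph, SimpleGraph.fromRel_adj]
      exact ⟨by intro e; have := congrArg Fin.val e; simp at this, Or.inl rfl⟩
    have hadj' : Gᶜ.Adj u v := by rw [← he]; exact hf _ _ hstar
    rw [SimpleGraph.compl_adj] at hadj'
    rw [hT, Finset.mem_insert] at hvT
    rcases hvT with rfl | hvT
    · exact hadj'.1 rfl
    · obtain ⟨t, ht, he2⟩ := Finset.mem_image.1 hvT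
      have := hadj t (Finset.mem_range.1 ht)
      rw [he2] at this
      exact hadj'.2 this
  have hle := Finset.card_le_univ (S ∪ T)
  rw [Finset.card_union_of_disjoint hdisj, hScard, hTcard] at hle
  simpa using hle

lemma noTstar {m A B N : ℕ} (hm : 5 ≤ m) : ¬ Contains (Gc m A B N) (Tstar m) := by
  rintro ⟨f, hf⟩
  set F : ℕ → ℕ := fun i => if h : i < m then (f ⟨i, h⟩).val else 0 with hFdef
  have hinj : ∀ i1, i1 < m → ∀ i2, i2 < m → F i1 = F i2 → i1 = i2 := by
    intro i1 h1 i2 h2 he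
    simp only [hFdef, dif_pos h1, dif_pos h2] at he
    have := congrArg Fin.val (f.injective (Fin.val_injective he))
    simpa using this
  have hedge : ∀ i1 i2 : ℕ, ∀ _ : i1 < m, ∀ _ : i2 < m,
      ((i1 = 0 ∧ 1 ≤ i2 ∧ i2 ≤ m - 3) ∨ (i1 = m - 3 ∧ i2 = m - 2) ∨
        (i1 = m - 2 ∧ i2 = m - 1)) →
      cAdj m A B (F i1) (F i2) := by
    intro i1 i2 h1 h2 hr
    have hne : (⟨i1, h1⟩ : Fin m) ≠ ⟨i2, h2⟩ := by
      intro e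
      have := congrArg Fin.val e
      simp only at this
      omega
    have hadj := hf ⟨i1, h1⟩ ⟨i2, h2⟩ (by
      rw [Tstar, SimpleGraph.fromRel_adj]
      exact ⟨hne, Or.inl hr⟩)
    simp only [hFdef, dif_pos h1, dif_pos h2]
    exact hadj
  have hcomp : ∀ i, i < m →
      regF A B (F i) = regF A B (F 0) ∧ blkF m A B (F i) = blkF m A B (F 0) := by
    intro i hi
    have e1 := hedge 0 (m - 3) (by omega) (by omega) (Or.inl ⟨rfl, by omega, by omega⟩)
    have e2 := hedge (m - 3) (m - 2) (by omega) (by omega) (Or.inr (Or.inl ⟨rfl, rfl⟩))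
    have e3 := hedge (m - 2) (m - 1) (by omega) (by omega) (Or.inr (Or.inr ⟨rfl, rfl⟩))
    rcases Nat.lt_or_ge i 1 with h | h
    · have : i = 0 := by omega
      subst this; exact ⟨rfl, rfl⟩
    rcases Nat.lt_or_ge i (m - 2) with h' | h'
    · have e := hedge 0 i (by omega) hi (Or.inl ⟨rfl, by omega, by omega⟩)
      exact ⟨e.2.1.symm, e.2.2.1.symm⟩
    rcases Nat.lt_or_ge i (m - 1) with h'' | h''
    · have : i = m - 2 := by omega
      subst this
      exact ⟨by rw [← e2.2.1, ← e1.2.1], by rw [← e2.2.2.1, ← e1.2.2.1]⟩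
    · have : i = m - 1 := by omega
      subst this
      exact ⟨by rw [← e3.2.1, ← e2.2.1, ← e1.2.1],
             by rw [← e3.2.2.1, ← e2.2.2.1, ← e1.2.2.1]⟩
  by_cases hc1 : F 0 < A
  · -- region 0 : a clique of size m-1
    have hreg0 : regF A B (F 0) = 0 := if_pos hc1
    have hlt : ∀ i, i < m → F i < A ∧ F i / (m - 1) = F 0 / (m - 1) := by
      intro i hi
      obtain ⟨hr, hb⟩ := hcomp i hi
      rw [hreg0] at hr
      have hiA : F i < A := regF_eq_zero hr
      refine ⟨hiA, ?_⟩
      rwa [blkF, if_pos hiA, blkF, if_pos hc1] at hb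
    have hle := injLe (p := m) (q := m - 1) (fun i => F i % (m - 1))
      (fun t _ => Nat.mod_lt _ (by omega))
      (by
        intro t1 h1 t2 h2 he
        have d1 := (hlt t1 h1).2
        have d2 := (hlt t2 h2).2
        have m1 := Nat.div_add_mod (F t1) (m - 1)
        have m2 := Nat.div_add_mod (F t2) (m - 1)
        rw [d1] at m1
        rw [d2] at m2
        exact hinj t1 h1 t2 h2 (by rw [← m1, ← m2, he]))
    omega
  by_cases hc2 : F 0 < A + B
  · -- region 1 : a clique of size m-2
    have hreg1 : regF A B (F 0) = 1 := by rw [regF, if_neg hc1, if_pos hc2]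
    have hlt : ∀ i, i < m →
        (A ≤ F i ∧ F i < A + B) ∧ (F i - A) / (m - 2) = (F 0 - A) / (m - 2) := by
      intro i hi
      obtain ⟨hr, hb⟩ := hcomp i hi
      rw [hreg1] at hr
      have hiA := regF_eq_one hr
      refine ⟨hiA, ?_⟩
      rwa [blkF, if_neg (by omega), if_pos hiA.2, blkF, if_neg hc1, if_pos hc2] at hb
    have hle := injLe (p := m) (q := m - 2) (fun i => (F i - A) % (m - 2))
      (fun t _ => Nat.mod_lt _ (by omega))
      (by
        intro t1 h1 t2 h2 he
        have d1 := (hlt t1 h1).2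
        have d2 := (hlt t2 h2).2
        have m1 := Nat.div_add_mod (F t1 - A) (m - 2)
        have m2 := Nat.div_add_mod (F t2 - A) (m - 2)
        rw [d1] at m1
        rw [d2] at m2
        have hsub : F t1 - A = F t2 - A := by rw [← m1, ← m2, he]
        have hA1 := (hlt t1 h1).1.1
        have hA2 := (hlt t2 h2).1.1
        exact hinj t1 h1 t2 h2 (by omega))
    omega
  · -- region 2 : complete bipartite block
    have hreg2 : regF A B (F 0) = 2 := by rw [regF, if_neg hc1, if_neg hc2]
    have hlt : ∀ i, i < m →
        A + B ≤ F i ∧ (F i - A - B) / (2 * (m - 3)) = (F 0 - A - B) / (2 * (m - 3)) := by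
      intro i hi
      obtain ⟨hr, hb⟩ := hcomp i hi
      rw [hreg2] at hr
      have hiA := regF_eq_two hr
      refine ⟨hiA, ?_⟩
      rwa [blkF, if_neg (by omega), if_neg (by omega), blkF, if_neg hc1, if_neg hc2] at hb
    -- side facts
    have hside : ∀ i1 i2 : ℕ, ∀ _ : i1 < m, ∀ _ : i2 < m,
        ((i1 = 0 ∧ 1 ≤ i2 ∧ i2 ≤ m - 3) ∨ (i1 = m - 3 ∧ i2 = m - 2) ∨
          (i1 = m - 2 ∧ i2 = m - 1)) →
        ¬ (sBF m A B (F i1) ↔ sBF m A B (F i2)) := by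
      intro i1 i2 h1 h2 hr
      have e := hedge i1 i2 h1 h2 hr
      rcases e.2.2.2 with h | h
      · exfalso
        apply h
        rw [(hcomp i1 h1).1, hreg2]
      · exact h
    -- opposite side of F 0 for indices in [1, m-3] ∪ {m-1}
    have hopp : ∀ i, (1 ≤ i ∧ i ≤ m - 3) ∨ i = m - 1 →
        (sBF m A B (F i) ↔ ¬ sBF m A B (F 0)) := by
      intro i hi
      rcases hi with hi | hi
      · have := hside 0 i (by omega) (by omega) (Or.inl ⟨rfl, hi.1, hi.2⟩)
        tauto
      · subst hi
        have s1 := hside 0 (m - 3) (by omega) (by omega) (Or.inl ⟨rfl, by omega, by omega⟩)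
        have s2 := hside (m - 3) (m - 2) (by omega) (by omega) (Or.inr (Or.inl ⟨rfl, rfl⟩))
        have s3 := hside (m - 2) (m - 1) (by omega) (by omega) (Or.inr (Or.inr ⟨rfl, rfl⟩))
        tauto
    have hK : 0 < 2 * (m - 3) := by omega
    -- the index map: t < m-2 ↦ t+1 for t < m-3, and m-1 for t = m-3
    set idx : ℕ → ℕ := fun t => if t < m - 3 then t + 1 else m - 1 with hidx
    have hidxlt : ∀ t, t < m - 2 → idx t < m := by
      intro t ht; simp only [hidx]; split_ifs <;> omega
    have hidxopp : ∀ t, t < m - 2 → (1 ≤ idx t ∧ idx t ≤ m - 3) ∨ idx t = m - 1 := by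
      intro t ht; simp only [hidx]; split_ifs with h
      · exact Or.inl ⟨by omega, by omega⟩
      · exact Or.inr rfl
    have hidxinj : ∀ t1, t1 < m - 2 → ∀ t2, t2 < m - 2 → idx t1 = idx t2 → t1 = t2 := by
      intro t1 h1 t2 h2 he; simp only [hidx] at he; split_ifs at he <;> omega
    -- offsets
    set o : ℕ → ℕ := fun i => (F i - A - B) % (2 * (m - 3)) with ho
    have hoK : ∀ i, o i < 2 * (m - 3) := fun i => Nat.mod_lt _ hK
    have hsB : ∀ i, sBF m A B (F i) ↔ o i < m - 3 := fun i => Iff.rfl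
    have hrec : ∀ i, i < m → F i = A + B + ((2 * (m - 3)) * ((F 0 - A - B) / (2 * (m - 3))) + o i) := by
      intro i hi
      have hd := (hlt i hi).2
      have hm1 := Nat.div_add_mod (F i - A - B) (2 * (m - 3))
      rw [hd] at hm1
      have := (hlt i hi).1
      have ho1 : o i = (F i - A - B) % (2 * (m - 3)) := rfl
      omega
    by_cases hs0 : o 0 < m - 3
    · have hle := injLe (p := m - 2) (q := m - 3) (fun t => o (idx t) - (m - 3))
        (by
          intro t ht
          show o (idx t) - (m - 3) < m - 3
          have h2 : ¬ o (idx t) < m - 3 := by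
            intro hc
            exact ((hopp (idx t) (hidxopp t ht)).1 hc) ((hsB 0).2 hs0)
          have := hoK (idx t)
          omega)
        (by
          intro t1 h1 t2 h2 he
          have c1 : ¬ o (idx t1) < m - 3 := by
            intro hc
            exact ((hopp (idx t1) (hidxopp t1 h1)).1 hc) ((hsB 0).2 hs0)
          have c2 : ¬ o (idx t2) < m - 3 := by
            intro hc
            exact ((hopp (idx t2) (hidxopp t2 h2)).1 hc) ((hsB 0).2 hs0)
          have ho12 : o (idx t1) = o (idx t2) := by omega
          have r1 := hrec (idx t1) (hidxlt t1 h1)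
          have r2 := hrec (idx t2) (hidxlt t2 h2)
          have hFe : F (idx t1) = F (idx t2) := by omega
          exact hidxinj t1 h1 t2 h2 (hinj _ (hidxlt t1 h1) _ (hidxlt t2 h2) hFe))
      omega
    · have hle := injLe (p := m - 2) (q := m - 3) (fun t => o (idx t))
        (by
          intro t ht
          exact (hopp (idx t) (hidxopp t ht)).2 (by exact fun hc => hs0 hc)
          )
        (by
          intro t1 h1 t2 h2 he
          have r1 := hrec (idx t1) (hidxlt t1 h1)
          have r2 := hrec (idx t2) (hidxlt t2 h2)
          have hFe : F (idx t1) = F (idx t2) := by omega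
          exact hidxinj t1 h1 t2 h2 (hinj _ (hidxlt t1 h1) _ (hidxlt t2 h2) hFe))
      omega

lemma noStar {m n A B x y z : ℕ} (hm : 5 ≤ m) (hmn : m < n)
    (hA : A = (m - 1) * x) (hB : B = (m - 2) * y)
    (hrep : m + n - 4 = A + B + 2 * (m - 3) * z) :
    ¬ Contains (Gc m A B (m + n - 4))ᶜ (_root_.starGraph n) := by
  rintro ⟨f, hf⟩
  have hn : (0:ℕ) < n := by omega
  have hA' : A = x * (m - 1) := by rw [hA, mul_comm]
  have hB' : B = y * (m - 2) := by rw [hB, mul_comm]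
  have hrep' : m + n - 4 = A + B + z * (2 * (m - 3)) := by rw [hrep]; ring
  set u := f ⟨0, hn⟩ with hu
  have hmain : ∃ gnb : ℕ → Fin (m + n - 4),
      (∀ t, t < m - 3 → (Gc m A B (m + n - 4)).Adj u (gnb t)) ∧
      (∀ t1, t1 < m - 3 → ∀ t2, t2 < m - 3 → gnb t1 = gnb t2 → t1 = t2) := by
    by_cases hc1 : u.val < A
    · -- region 0 : clique of size m-1
      obtain ⟨q, r, hqu, hrk⟩ : ∃ q r, q * (m - 1) + r = u.val ∧ r < m - 1 :=
        ⟨u.val / (m - 1), u.val % (m - 1),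
          by rw [mul_comm]; exact Nat.div_add_mod u.val (m - 1), Nat.mod_lt _ (by omega)⟩
      have hbound : q * (m - 1) + (m - 1) ≤ A := by
        have hqx : q + 1 ≤ x := by
          by_contra hq
          push_neg at hq
          have : x * (m - 1) ≤ q * (m - 1) := Nat.mul_le_mul_right _ (by omega)
          omega
        have h1 : (q + 1) * (m - 1) ≤ x * (m - 1) := Nat.mul_le_mul_right _ hqx
        have h2 : (q + 1) * (m - 1) = q * (m - 1) + (m - 1) := by ring
        omega
      set gnb : ℕ → Fin (m + n - 4) := fun t =>
        if h : t < m - 3 then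
          ⟨q * (m - 1) + (if t < r then t else t + 1), by
            have hofflt : (if t < r then t else t + 1) < m - 1 := by split_ifs <;> omega
            omega⟩
        else u with hgnb
      refine ⟨gnb, ?_, ?_⟩
      · intro t ht
        have hval : (gnb t).val = q * (m - 1) + (if t < r then t else t + 1) := by
          rw [hgnb]; simp only [dif_pos ht]
        have hofflt : (if t < r then t else t + 1) < m - 1 := by split_ifs <;> omega
        have hvA : (gnb t).val < A := by omega
        show cAdj m A B u.val (gnb t).val
        refine ⟨?_, ?_, ?_, Or.inl ?_⟩
        · rw [hval]; intro he; split_ifs at he <;> omega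
        · rw [regF, if_pos hc1, regF, if_pos hvA]
        · rw [blkF, if_pos hc1, blkF, if_pos hvA, hval, ← hqu,
            (divMulAdd (show 0 < m - 1 by omega) hrk).1,
            (divMulAdd (show 0 < m - 1 by omega) hofflt).1]
        · rw [regF, if_pos hc1]; omega
      · intro t1 h1 t2 h2 he
        have hv1 : (gnb t1).val = q * (m - 1) + (if t1 < r then t1 else t1 + 1) := by
          rw [hgnb]; simp only [dif_pos h1]
        have hv2 : (gnb t2).val = q * (m - 1) + (if t2 < r then t2 else t2 + 1) := by
          rw [hgnb]; simp only [dif_pos h2]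
        have := congrArg Fin.val he
        rw [hv1, hv2] at this
        split_ifs at this <;> omega
    by_cases hc2 : u.val < A + B
    · -- region 1 : clique of size m-2
      obtain ⟨q, r, hqu, hrk⟩ : ∃ q r, q * (m - 2) + r = u.val - A ∧ r < m - 2 :=
        ⟨(u.val - A) / (m - 2), (u.val - A) % (m - 2),
          by rw [mul_comm]; exact Nat.div_add_mod _ (m - 2), Nat.mod_lt _ (by omega)⟩
      have hbound : q * (m - 2) + (m - 2) ≤ B := by
        have hqy : q + 1 ≤ y := by
          by_contra hq
          push_neg at hq
          have : y * (m - 2) ≤ q * (m - 2) := Nat.mul_le_mul_right _ (by omega)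
          omega
        have h1 : (q + 1) * (m - 2) ≤ y * (m - 2) := Nat.mul_le_mul_right _ hqy
        have h2 : (q + 1) * (m - 2) = q * (m - 2) + (m - 2) := by ring
        omega
      set gnb : ℕ → Fin (m + n - 4) := fun t =>
        if h : t < m - 3 then
          ⟨A + (q * (m - 2) + (if t < r then t else t + 1)), by
            have hofflt : (if t < r then t else t + 1) < m - 2 := by split_ifs <;> omega
            omega⟩
        else u with hgnb
      refine ⟨gnb, ?_, ?_⟩
      · intro t ht
        have hval : (gnb t).val = A + (q * (m - 2) + (if t < r then t else t + 1)) := by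
          rw [hgnb]; simp only [dif_pos ht]
        have hofflt : (if t < r then t else t + 1) < m - 2 := by split_ifs <;> omega
        have hv1 : ¬ (gnb t).val < A := by omega
        have hv2 : (gnb t).val < A + B := by omega
        have hsubv : (gnb t).val - A = q * (m - 2) + (if t < r then t else t + 1) := by omega
        have hsub0 : u.val - A = q * (m - 2) + r := by omega
        show cAdj m A B u.val (gnb t).val
        refine ⟨?_, ?_, ?_, Or.inl ?_⟩
        · rw [hval]; intro he; split_ifs at he <;> omega
        · rw [regF, if_neg hc1, if_pos hc2, regF, if_neg hv1, if_pos hv2]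
        · rw [blkF, if_neg hc1, if_pos hc2, blkF, if_neg hv1, if_pos hv2, hsubv, hsub0,
            (divMulAdd (show 0 < m - 2 by omega) hrk).1,
            (divMulAdd (show 0 < m - 2 by omega) hofflt).1]
        · rw [regF, if_neg hc1, if_pos hc2]; omega
      · intro t1 h1 t2 h2 he
        have hv1 : (gnb t1).val = A + (q * (m - 2) + (if t1 < r then t1 else t1 + 1)) := by
          rw [hgnb]; simp only [dif_pos h1]
        have hv2 : (gnb t2).val = A + (q * (m - 2) + (if t2 < r then t2 else t2 + 1)) := by
          rw [hgnb]; simp only [dif_pos h2]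
        have := congrArg Fin.val he
        rw [hv1, hv2] at this
        split_ifs at this <;> omega
    · -- region 2 : complete bipartite block
      obtain ⟨q, r, hqu, hrk⟩ : ∃ q r, q * (2 * (m - 3)) + r = u.val - A - B ∧ r < 2 * (m - 3) :=
        ⟨(u.val - A - B) / (2 * (m - 3)), (u.val - A - B) % (2 * (m - 3)),
          by rw [mul_comm]; exact Nat.div_add_mod _ (2 * (m - 3)), Nat.mod_lt _ (by omega)⟩
      have huN : u.val < m + n - 4 := u.isLt
      have hbound : q * (2 * (m - 3)) + 2 * (m - 3) ≤ z * (2 * (m - 3)) := by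
        have hqz : q + 1 ≤ z := by
          by_contra hq
          push_neg at hq
          have : z * (2 * (m - 3)) ≤ q * (2 * (m - 3)) := Nat.mul_le_mul_right _ (by omega)
          omega
        have h1 : (q + 1) * (2 * (m - 3)) ≤ z * (2 * (m - 3)) := Nat.mul_le_mul_right _ hqz
        have h2 : (q + 1) * (2 * (m - 3)) = q * (2 * (m - 3)) + 2 * (m - 3) := by ring
        omega
      set gnb : ℕ → Fin (m + n - 4) := fun t =>
        if h : t < m - 3 then
          ⟨A + B + (q * (2 * (m - 3)) + (if r < m - 3 then m - 3 + t else t)), by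
            have hofflt : (if r < m - 3 then m - 3 + t else t) < 2 * (m - 3) := by
              split_ifs <;> omega
            omega⟩
        else u with hgnb
      refine ⟨gnb, ?_, ?_⟩
      · intro t ht
        have hval : (gnb t).val
            = A + B + (q * (2 * (m - 3)) + (if r < m - 3 then m - 3 + t else t)) := by
          rw [hgnb]; simp only [dif_pos ht]
        have hofflt : (if r < m - 3 then m - 3 + t else t) < 2 * (m - 3) := by
          split_ifs <;> omega
        have hv1 : ¬ (gnb t).val < A := by omega
        have hv2 : ¬ (gnb t).val < A + B := by omega
        have hsubv : (gnb t).val - A - B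
            = q * (2 * (m - 3)) + (if r < m - 3 then m - 3 + t else t) := by omega
        have hsub0 : u.val - A - B = q * (2 * (m - 3)) + r := by omega
        show cAdj m A B u.val (gnb t).val
        refine ⟨?_, ?_, ?_, Or.inr ?_⟩
        · rw [hval]; intro he; split_ifs at he <;> omega
        · rw [regF, if_neg hc1, if_neg hc2, regF, if_neg hv1, if_neg hv2]
        · rw [blkF, if_neg hc1, if_neg hc2, blkF, if_neg hv1, if_neg hv2, hsubv, hsub0,
            (divMulAdd (show 0 < 2 * (m - 3) by omega) hrk).1,
            (divMulAdd (show 0 < 2 * (m - 3) by omega) hofflt).1]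
        · simp only [sBF]
          rw [hsubv, hsub0,
            (divMulAdd (show 0 < 2 * (m - 3) by omega) hrk).2,
            (divMulAdd (show 0 < 2 * (m - 3) by omega) hofflt).2]
          split_ifs with hh
          · intro hiff; exact absurd (hiff.1 hh) (by omega)
          · intro hiff; exact hh (hiff.2 (by omega))
      · intro t1 h1 t2 h2 he
        have hv1 : (gnb t1).val
            = A + B + (q * (2 * (m - 3)) + (if r < m - 3 then m - 3 + t1 else t1)) := by
          rw [hgnb]; simp only [dif_pos h1]
        have hv2 : (gnb t2).val
            = A + B + (q * (2 * (m - 3)) + (if r < m - 3 then m - 3 + t2 else t2)) := by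
          rw [hgnb]; simp only [dif_pos h2]
        have := congrArg Fin.val he
        rw [hv1, hv2] at this
        split_ifs at this <;> omega
  obtain ⟨gnb, hadj, hginj⟩ := hmain
  have hfin := starCount hn (Gc m A B (m + n - 4)) f hf gnb hadj hginj
  omega

lemma greedy {m n : ℕ} (hm : 5 ≤ m) (hmn : m < n) (G : SimpleGraph (Fin (m + n - 2))) :
    Contains G (Tstar m) ∨ Contains Gᶜ (_root_.starGraph n) := by
  classical
  by_contra hcon
  push_neg at hcon
  obtain ⟨hT, hS⟩ := hcon
  have hpos : 0 < m + n - 2 := by omega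
  -- minimum degree at least m-1
  have hdeg : ∀ v : Fin (m + n - 2),
      m - 1 ≤ (Finset.univ.filter (fun w => G.Adj v w)).card := by
    intro v
    by_contra hlt
    push_neg at hlt
    have hset : (Finset.univ.filter (fun w => Gᶜ.Adj v w))
        = Finset.univ \ insert v (Finset.univ.filter (fun w => G.Adj v w)) := by
      ext w
      simp only [Finset.mem_filter, Finset.mem_univ, true_and, Finset.mem_sdiff,
        Finset.mem_insert, SimpleGraph.compl_adj]
      constructor
      · rintro ⟨h1, h2⟩ 
        intro hc
        rcases hc with rfl | hc
        · exact h1 rfl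
        · exact h2 hc
      · intro h
        exact ⟨fun hvw => h (Or.inl hvw.symm), fun ha => h (Or.inr ha)⟩
    have hcard : n - 1 ≤ (Finset.univ.filter (fun w => Gᶜ.Adj v w)).card := by
      rw [hset, Finset.card_sdiff_of_subset (Finset.subset_univ _)]
      have h1 : (insert v (Finset.univ.filter (fun w => G.Adj v w))).card ≤ m - 1 :=
        (Finset.card_insert_le _ _).trans (by omega)
      have h2 : (Finset.univ : Finset (Fin (m + n - 2))).card = m + n - 2 := by simp
      omega
    obtain ⟨t, hts, htc⟩ := Finset.exists_subset_card_eq hcard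
    have hne0 : ∀ w ∈ t, Gᶜ.Adj v w := fun w hw => (Finset.mem_filter.1 (hts hw)).2
    have hv_ne : ∀ k : Fin t.card, (t.equivFin.symm k).1 ≠ v := by
      intro k heq
      exact (hne0 _ (t.equivFin.symm k).2).ne heq.symm
    set g : Fin n → Fin (m + n - 2) := fun i =>
      if h : i.val = 0 then v
      else (t.equivFin.symm ⟨i.val - 1, by rw [htc]; omega⟩).1 with hg
    have ginj : Function.Injective g := by
      intro i j hij
      rw [hg] at hij
      simp only at hij
      by_cases hi : i.val = 0 <;> by_cases hj : j.val = 0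
      · exact Fin.ext (by omega)
      · rw [dif_pos hi, dif_neg hj] at hij
        exact absurd hij.symm (hv_ne _)
      · rw [dif_neg hi, dif_pos hj] at hij
        exact absurd hij (hv_ne _)
      · rw [dif_neg hi, dif_neg hj] at hij
        have := congrArg Fin.val (t.equivFin.symm.injective (Subtype.coe_injective hij))
        simp only at this
        exact Fin.ext (by omega)
    have hstar : ∀ a b, (_root_.starGraph n).Adj a b → Gᶜ.Adj (g a) (g b) := by
      intro a b hab
      rw [_root_.starGraph, SimpleGraph.fromRel_adj] at hab
      obtain ⟨hne, hr⟩ := hab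
      rcases hr with hr | hr
      · have hb : ¬ b.val = 0 := fun hb => hne (Fin.ext (by omega))
        rw [hg]; simp only
        rw [dif_pos hr, dif_neg hb]
        exact hne0 _ (t.equivFin.symm _).2
      · have ha : ¬ a.val = 0 := fun ha => hne (Fin.ext (by omega))
        rw [hg]; simp only
        rw [dif_pos hr, dif_neg ha]
        exact (hne0 _ (t.equivFin.symm _).2).symm
    exact hS ⟨⟨g, ginj⟩, hstar⟩
  -- now greedily embed Tstar
  set u0 : Fin (m + n - 2) := ⟨0, hpos⟩ with hu0
  obtain ⟨s, hsub, hscard⟩ := Finset.exists_subset_card_eq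
    (le_trans (show m - 3 ≤ m - 1 by omega) (hdeg u0))
  have hsadj : ∀ w ∈ s, G.Adj u0 w := fun w hw => (Finset.mem_filter.1 (hsub hw)).2
  set e : ℕ → Fin (m + n - 2) := fun k =>
    if h : k < m - 3 then (s.equivFin.symm ⟨k, by rw [hscard]; exact h⟩).1 else u0 with he
  have hemem : ∀ k, k < m - 3 → e k ∈ s := by
    intro k hk
    rw [he]; simp only [dif_pos hk]
    exact (s.equivFin.symm _).2
  have heinj : ∀ k1, k1 < m - 3 → ∀ k2, k2 < m - 3 → e k1 = e k2 → k1 = k2 := by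
    intro k1 h1 k2 h2 hek
    rw [he] at hek
    simp only [dif_pos h1, dif_pos h2] at hek
    have := congrArg Fin.val (s.equivFin.symm.injective (Subtype.coe_injective hek))
    simpa using this
  have hu0s : u0 ∉ s := fun hc => (G.ne_of_adj (hsadj _ hc)) rfl
  -- pick p, a new neighbour of e (m-4)
  have hp1 : ((Finset.univ.filter (fun z => G.Adj (e (m - 4)) z)) \ insert u0 s).Nonempty := by
    rw [← Finset.card_pos]
    have h1 := Finset.card_le_card_sdiff_add_card
      (s := Finset.univ.filter (fun z => G.Adj (e (m - 4)) z)) (t := insert u0 s)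
    have h2 : (insert u0 s).card ≤ m - 2 := (Finset.card_insert_le _ _).trans (by omega)
    have h3 := hdeg (e (m - 4))
    omega
  obtain ⟨p, hp⟩ := hp1
  rw [Finset.mem_sdiff, Finset.mem_filter, Finset.mem_insert] at hp
  push_neg at hp
  obtain ⟨⟨-, hpadj⟩, hpu0, hps⟩ := hp
  -- pick q, a new neighbour of p
  have hq1 : ((Finset.univ.filter (fun z => G.Adj p z)) \ insert u0 s).Nonempty := by
    rw [← Finset.card_pos]
    have h1 := Finset.card_le_card_sdiff_add_card
      (s := Finset.univ.filter (fun z => G.Adj p z)) (t := insert u0 s)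
    have h2 : (insert u0 s).card ≤ m - 2 := (Finset.card_insert_le _ _).trans (by omega)
    have h3 := hdeg p
    omega
  obtain ⟨q, hq⟩ := hq1
  rw [Finset.mem_sdiff, Finset.mem_filter, Finset.mem_insert] at hq
  push_neg at hq
  obtain ⟨⟨-, hqadj⟩, hqu0, hqs⟩ := hq
  have hqp : q ≠ p := fun hc => hqadj.ne hc.symm
  -- the embedding of Tstar
  set F : Fin m → Fin (m + n - 2) := fun i =>
    if i.val = 0 then u0 else if i.val ≤ m - 3 then e (i.val - 1)
    else if i.val = m - 2 then p else q with hF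
  have hchar : ∀ i : Fin m,
      (i.val = 0 ∧ F i = u0) ∨ (1 ≤ i.val ∧ i.val ≤ m - 3 ∧ F i = e (i.val - 1)) ∨
      (i.val = m - 2 ∧ F i = p) ∨ (i.val = m - 1 ∧ F i = q) := by
    intro i
    have hi := i.isLt
    rw [hF]; simp only
    split_ifs with h1 h2 h3
    · exact Or.inl ⟨h1, rfl⟩
    · exact Or.inr (Or.inl ⟨by omega, h2, rfl⟩)
    · exact Or.inr (Or.inr (Or.inl ⟨h3, rfl⟩))
    · exact Or.inr (Or.inr (Or.inr ⟨by omega, rfl⟩))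
  have hFinj : Function.Injective F := by
    intro i j hij
    rcases hchar i with ⟨hi, hFi⟩ | ⟨hi1, hi2, hFi⟩ | ⟨hi, hFi⟩ | ⟨hi, hFi⟩ <;>
      rcases hchar j with ⟨hj, hFj⟩ | ⟨hj1, hj2, hFj⟩ | ⟨hj, hFj⟩ | ⟨hj, hFj⟩ <;>
      rw [hFi, hFj] at hij
    · exact Fin.ext (by omega)
    · exfalso
      have hmem := hemem (j.val - 1) (by omega)
      rw [← hij] at hmem
      exact hu0s hmem
    · exact absurd hij.symm hpu0
    · exact absurd hij.symm hqu0
    · exfalso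
      have hmem := hemem (i.val - 1) (by omega)
      rw [hij] at hmem
      exact hu0s hmem
    · have := heinj _ (by omega) _ (by omega) hij
      exact Fin.ext (by omega)
    · exfalso
      have hmem := hemem (i.val - 1) (by omega)
      rw [hij] at hmem
      exact hps hmem
    · exfalso
      have hmem := hemem (i.val - 1) (by omega)
      rw [hij] at hmem
      exact hqs hmem
    · exact absurd hij hpu0
    · exfalso
      have hmem := hemem (j.val - 1) (by omega)
      rw [← hij] at hmem
      exact hps hmem
    · exact Fin.ext (by omega)
    · exact absurd hij.symm hqp
    · exact absurd hij hqu0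
    · exfalso
      have hmem := hemem (j.val - 1) (by omega)
      rw [← hij] at hmem
      exact hqs hmem
    · exact absurd hij hqp
    · exact Fin.ext (by omega)
  have hFadj : ∀ a b, (Tstar m).Adj a b → G.Adj (F a) (F b) := by
    have key : ∀ a b : Fin m,
        ((a.val = 0 ∧ 1 ≤ b.val ∧ b.val ≤ m - 3) ∨ (a.val = m - 3 ∧ b.val = m - 2) ∨
          (a.val = m - 2 ∧ b.val = m - 1)) → G.Adj (F a) (F b) := by
      intro a b hr
      rcases hr with ⟨h1, h2, h3⟩ | ⟨h1, h2⟩ | ⟨h1, h2⟩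
      · have hFa : F a = u0 := by rw [hF]; simp only; rw [if_pos h1]
        have hFb : F b = e (b.val - 1) := by
          rw [hF]; simp only; rw [if_neg (by omega), if_pos h3]
        rw [hFa, hFb]
        exact hsadj _ (hemem _ (by omega))
      · have hFa : F a = e (a.val - 1) := by
          rw [hF]; simp only; rw [if_neg (by omega), if_pos (by omega)]
        have hFb : F b = p := by
          rw [hF]; simp only; rw [if_neg (by omega), if_neg (by omega), if_pos h2]
        have hma : a.val - 1 = m - 4 := by omega
        rw [hFa, hFb, hma]
        exact hpadj
      · have hFa : F a = p := by
          rw [hF]; simp only; rw [if_neg (by omega), if_neg (by omega), if_pos h1]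
        have hFb : F b = q := by
          rw [hF]; simp only; rw [if_neg (by omega), if_neg (by omega), if_neg (by omega)]
        rw [hFa, hFb]
        exact hqadj
    intro a b hab
    rw [Tstar, SimpleGraph.fromRel_adj] at hab
    obtain ⟨hne, hr⟩ := hab
    rcases hr with hr | hr
    · exact key a b hr
    · exact (key b a hr).symm
  exact hT ⟨⟨F, hFinj⟩, hFadj⟩


theorem stmt15 {m n : ℕ} (hm : 5 ≤ m) (hmn : m < n)
    (hndvd : ¬ (m - 1) ∣ (n - 2))
    (x y z : ℕ) (hrep : m + n - 4 = (m - 1) * x + (m - 2) * y + 2 * (m - 3) * z)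
    (hub : ramsey (Tstar m) (_root_.starGraph n) ≤ m + n - 3) :
    ramsey (Tstar m) (_root_.starGraph n) = m + n - 3 := by
  have hA1 : ¬ Contains (Gc m ((m - 1) * x) ((m - 2) * y) (m + n - 4)) (Tstar m) := noTstar hm
  have hA2 : ¬ Contains (Gc m ((m - 1) * x) ((m - 2) * y) (m + n - 4))ᶜ (_root_.starGraph n) :=
    noStar hm hmn rfl rfl hrep
  unfold ramsey at hub ⊢
  set S : Set ℕ := {N | 0 < N ∧
    ∀ G : SimpleGraph (Fin N), Contains G (Tstar m) ∨ Contains Gᶜ (_root_.starGraph n)} with hSdef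
  have hne : S.Nonempty := ⟨m + n - 2, ⟨by omega, fun G => greedy hm hmn G⟩⟩
  have hmem := Nat.sInf_mem hne
  have hlow : m + n - 3 ≤ sInf S := by
    by_contra hlt
    push_neg at hlt
    obtain ⟨hpos, hall⟩ := hmem
    have hle : sInf S ≤ m + n - 4 := by omega
    rcases hall (SimpleGraph.comap (Fin.castLE hle)
        (Gc m ((m - 1) * x) ((m - 2) * y) (m + n - 4))) with ⟨g, hg⟩ | ⟨g, hg⟩
    · exact hA1 ⟨g.trans (Fin.castLEEmb hle), fun a b hab => hg a b hab⟩
    · refine hA2 ⟨g.trans (Fin.castLEEmb hle), fun a b hab => ?_⟩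
      have h2 := hg a b hab
      rw [SimpleGraph.compl_adj] at h2 ⊢
      exact ⟨fun hc => h2.1 ((Fin.castLEEmb hle).injective hc), fun hc => h2.2 hc⟩
  omega
end

section
/- Let m, n ∈ ℕ with n > m ≥ 7, n = k(m-1) + b with k ≥ 1, b ∈ {0,1,…,m-2}, b ≠ 3, and (m-b)/2 ≤ k ≤ m+2-b. Then the graph G = (2k+b-m)K_{m-2} ∪ (m+2-b-k)K_{m-3} has exactly m+n-6 vertices, each component of G has fewer than m vertices, and the complement of G has maximum degree at most n-3; consequently r(G_m, T_n*) > m+n-6 for every connected graph G_m of order m. -/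
open SimpleGraph

/-- Finite Ramsey theorem for cliques, with the binomial bound. -/
lemma ramsey_clique : ∀ (K s t : ℕ), s + t ≤ K → ∀ {V : Type*} (G : SimpleGraph V)
    (W : Finset V), (s + t).choose s ≤ W.card →
    (∃ A ⊆ W, G.IsNClique s A) ∨ (∃ B ⊆ W, Gᶜ.IsNClique t B) := by
  intro K
  induction K with
  | zero =>
    intro s t hst V G W _
    have hs : s = 0 := by omega
    subst hs
    exact Or.inl ⟨∅, Finset.empty_subset _, by simp⟩
  | succ K ih =>
    intro s t hst V G W hW
    classical
    rcases s with _ | s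
    · exact Or.inl ⟨∅, Finset.empty_subset _, by simp⟩
    rcases t with _ | t
    · exact Or.inr ⟨∅, Finset.empty_subset _, by simp⟩
    have hpos : 0 < W.card := lt_of_lt_of_le (Nat.choose_pos (by omega)) hW
    obtain ⟨v, hv⟩ := Finset.card_pos.mp hpos
    set A' := (W.erase v).filter (fun w => G.Adj v w) with hA'
    set B' := (W.erase v).filter (fun w => ¬ G.Adj v w) with hB'
    have hcard : A'.card + B'.card = W.card - 1 := by
      rw [hA', hB', Finset.card_filter_add_card_filter_not,
        Finset.card_erase_of_mem hv]
    have hch : (s+1+(t+1)).choose (s+1) = (s+(t+1)).choose s + (s+1+t).choose (s+1) := by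
      have h1 : s+1+(t+1) = (s+t+1)+1 := by omega
      have h2 : s+(t+1) = s+t+1 := by omega
      have h3 : s+1+t = s+t+1 := by omega
      rw [h1, h2, h3]
      exact Nat.choose_succ_succ _ _
    by_cases hA : (s+(t+1)).choose s ≤ A'.card
    · rcases ih s (t+1) (by omega) G A' hA with ⟨A, hsub, hcl⟩ | ⟨B, hsub, hcl⟩
      · left
        refine ⟨insert v A, ?_, hcl.insert ?_⟩
        · intro x hx
          rcases Finset.mem_insert.mp hx with rfl | hx
          · exact hv
          · exact Finset.erase_subset _ _ (Finset.filter_subset _ _ (hsub hx))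
        · intro x hx
          exact (Finset.mem_filter.mp (hsub hx)).2
      · exact Or.inr ⟨B, fun x hx =>
          Finset.erase_subset _ _ (Finset.filter_subset _ _ (hsub hx)), hcl⟩
    · have hB : (s+1+t).choose (s+1) ≤ B'.card := by omega
      rcases ih (s+1) t (by omega) G B' hB with ⟨A, hsub, hcl⟩ | ⟨B, hsub, hcl⟩
      · exact Or.inl ⟨A, fun x hx =>
          Finset.erase_subset _ _ (Finset.filter_subset _ _ (hsub hx)), hcl⟩
      · right
        refine ⟨insert v B, ?_, hcl.insert ?_⟩
        · intro x hx
          rcases Finset.mem_insert.mp hx with rfl | hx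
          · exact hv
          · exact Finset.erase_subset _ _ (Finset.filter_subset _ _ (hsub hx))
        · intro x hx
          have hm := Finset.mem_filter.mp (hsub hx)
          have hne : x ≠ v := Finset.ne_of_mem_erase (Finset.mem_of_mem_filter x (hsub hx))
          exact (SimpleGraph.compl_adj _ _ _).mpr ⟨hne.symm, hm.2⟩

/-- A `p`-clique in `G` yields a copy of any graph on `Fin p` in `G`. -/
lemma clique_contains {p N : ℕ} (G : SimpleGraph (Fin N)) (H : SimpleGraph (Fin p))
    (A : Finset (Fin N)) (hA : G.IsNClique p A) : Contains G H := by
  have hcard : A.card = p := hA.card_eq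
  let g : Fin p → Fin N := fun i => (A.equivFin.symm ⟨i.1, by rw [hcard]; exact i.2⟩ : Fin N)
  have hmem : ∀ i, g i ∈ A := fun i => (A.equivFin.symm _).2
  have hinj : Function.Injective g := by
    intro i j h
    have h2 := A.equivFin.symm.injective (Subtype.coe_injective h)
    have h3 : i.1 = j.1 := congrArg (@Fin.val A.card) h2
    exact Fin.ext h3
  refine ⟨⟨g, hinj⟩, ?_⟩
  intro a b hab
  exact hA.isClique (Finset.mem_coe.mpr (hmem a)) (Finset.mem_coe.mpr (hmem b))
    (fun h => hab.ne (hinj h))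

/-- The defining set of the Ramsey number is nonempty. -/
lemma ramsey_set_nonempty {p q : ℕ} (G₁ : SimpleGraph (Fin p)) (G₂ : SimpleGraph (Fin q)) :
    ∃ N, 0 < N ∧ ∀ G : SimpleGraph (Fin N), Contains G G₁ ∨ Contains Gᶜ G₂ := by
  refine ⟨max 1 ((p+q).choose p), Nat.lt_of_lt_of_le Nat.zero_lt_one (le_max_left _ _), ?_⟩
  intro G
  have h := ramsey_clique (p+q) p q le_rfl G Finset.univ (by
    rw [Finset.card_univ, Fintype.card_fin]; exact le_max_right _ _)
  rcases h with ⟨A, -, hA⟩ | ⟨B, -, hB⟩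
  · exact Or.inl (clique_contains G G₁ A hA)
  · exact Or.inr (clique_contains Gᶜ G₂ B hB)

set_option maxHeartbeats 1600000 in
theorem stmt17 {m n k b : ℕ} (hm : 7 ≤ m) (hmn : m < n)
    (hk : 1 ≤ k) (hb : b ≤ m - 2) (hb3 : b ≠ 3) (hn : n = k * (m - 1) + b)
    (hk1 : m - b ≤ 2 * k) (hk2 : k ≤ m + 2 - b) :
    let t : ℕ := (2 * k + b - m) * (m - 2)
    let G : SimpleGraph (Fin (m + n - 6)) :=
      SimpleGraph.fromRel (fun u v =>
        (u.val < t ∧ v.val < t ∧ u.val / (m - 2) = v.val / (m - 2)) ∨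
        (t ≤ u.val ∧ t ≤ v.val ∧ (u.val - t) / (m - 3) = (v.val - t) / (m - 3)))
    (2 * k + b - m) * (m - 2) + (m + 2 - b - k) * (m - 3) = m + n - 6 ∧
    (∀ H : SimpleGraph (Fin m), H.Connected → ¬ Contains G H) ∧
    (∀ v, (Gᶜ.neighborSet v).ncard ≤ n - 3) ∧
    (∀ Gm : SimpleGraph (Fin m), Gm.Connected → m + n - 6 < ramsey Gm (Tstar n)) := by
  have hn8 : 8 ≤ n := by omega
  intro t G
  classical
  have hm2 : 0 < m - 2 := by omega
  have hm3 : 0 < m - 3 := by omega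
  have ht : t = (2*k+b-m)*(m-2) := rfl
  have hG : G = SimpleGraph.fromRel (fun u v : Fin (m + n - 6) =>
      (u.val < t ∧ v.val < t ∧ u.val / (m - 2) = v.val / (m - 2)) ∨
      (t ≤ u.val ∧ t ≤ v.val ∧ (u.val - t) / (m - 3) = (v.val - t) / (m - 3))) := rfl
  clear_value t G
  -- Part 1 : the arithmetic identity
  have hnz : (n : ℤ) = k * ((m:ℤ) - 1) + b := by
    zify [show 1 ≤ m by omega] at hn
    exact hn
  have part1 : (2*k+b-m)*(m-2) + (m+2-b-k)*(m-3) = m+n-6 := by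
    zify [show m ≤ 2*k+b by omega, show b ≤ m+2 by omega, hk2,
      show 2 ≤ m by omega, show 3 ≤ m by omega, show 6 ≤ m+n by omega]
    rw [hnz]; ring
  have htN : t + (m+2-b-k)*(m-3) = m+n-6 := by rw [ht]; exact part1
  -- the colouring function
  obtain ⟨c, hc⟩ : ∃ c : Fin (m+n-6) → ℕ × Bool,
      c = fun v => if v.val < t then (v.val/(m-2), false) else ((v.val - t)/(m-3), true) :=
    ⟨_, rfl⟩
  have adj_iff : ∀ u v : Fin (m+n-6), G.Adj u v ↔ u ≠ v ∧ c u = c v := by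
    have hrc : ∀ u v : Fin (m+n-6),
        ((u.val < t ∧ v.val < t ∧ u.val / (m - 2) = v.val / (m - 2)) ∨
        (t ≤ u.val ∧ t ≤ v.val ∧ (u.val - t) / (m - 3) = (v.val - t) / (m - 3)))
        ↔ c u = c v := by
      intro u v
      simp only [hc]
      constructor
      · rintro (⟨h1, h2, h3⟩ | ⟨h1, h2, h3⟩)
        · simp only [if_pos h1, if_pos h2, h3]
        · simp only [if_neg (Nat.not_lt.mpr h1), if_neg (Nat.not_lt.mpr h2), h3]
      · intro h
        by_cases h1 : u.val < t <;> by_cases h2 : v.val < t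
        · rw [if_pos h1, if_pos h2, Prod.mk.injEq] at h
          exact Or.inl ⟨h1, h2, h.1⟩
        · rw [if_pos h1, if_neg h2, Prod.mk.injEq] at h
          exact absurd h.2 (by simp)
        · rw [if_neg h1, if_pos h2, Prod.mk.injEq] at h
          exact absurd h.2 (by simp)
        · rw [if_neg h1, if_neg h2, Prod.mk.injEq] at h
          exact Or.inr ⟨Nat.not_lt.mp h1, Nat.not_lt.mp h2, h.1⟩
    intro u v
    rw [hG, SimpleGraph.fromRel_adj]
    constructor
    · rintro ⟨hne, h | h⟩
      exacts [⟨hne, (hrc u v).mp h⟩, ⟨hne, ((hrc v u).mp h).symm⟩]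
    · rintro ⟨hne, h⟩
      exact ⟨hne, Or.inl ((hrc u v).mpr h)⟩
  -- the "parts"
  obtain ⟨P, hP⟩ : ∃ P : Fin (m+n-6) → Finset (Fin (m+n-6)),
      P = fun v => Finset.univ.filter (fun w => c w = c v) := ⟨_, rfl⟩
  have memP : ∀ v w, w ∈ P v ↔ c w = c v := by
    intro v w; rw [hP]; simp
  -- characterizations of c-values
  have hclt : ∀ v : Fin (m+n-6), v.val < t → c v = (v.val/(m-2), false) := by
    intro v hv; simp only [hc, if_pos hv]
  have hcge : ∀ v : Fin (m+n-6), t ≤ v.val → c v = ((v.val - t)/(m-3), true) := by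
    intro v hv; simp only [hc, if_neg (Nat.not_lt.mpr hv)]
  -- upper bound on part sizes
  have hPhigh : ∀ v, (P v).card ≤ m - 2 := by
    intro v
    by_cases hv : v.val < t
    · have key : ∀ w : Fin (m+n-6), c w = c v →
          w.val < t ∧ w.val/(m-2) = v.val/(m-2) := by
        intro w hw
        rw [hclt v hv] at hw
        simp only [hc] at hw
        by_cases h1 : w.val < t
        · rw [if_pos h1, Prod.mk.injEq] at hw
          exact ⟨h1, hw.1⟩
        · rw [if_neg h1, Prod.mk.injEq] at hw
          exact absurd hw.2 (by simp)
      have h := Finset.card_le_card_of_injOn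
        (s := P v) (t := (Finset.univ : Finset (Fin (m-2))))
        (fun w => (⟨w.val % (m-2), Nat.mod_lt _ hm2⟩ : Fin (m-2)))
        (fun a _ => Finset.mem_univ _) ?_
      · rwa [Finset.card_univ, Fintype.card_fin] at h
      · intro a ha b hb hab
        have ha' := key a ((memP v a).mp (Finset.mem_coe.mp ha))
        have hb' := key b ((memP v b).mp (Finset.mem_coe.mp hb))
        have hmod : a.val % (m-2) = b.val % (m-2) := congrArg Fin.val hab
        have ea := Nat.div_add_mod a.val (m-2)
        have eb := Nat.div_add_mod b.val (m-2)
        rw [ha'.2] at ea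
        rw [hb'.2] at eb
        exact Fin.ext (by rw [← ea, ← eb, hmod])
    · have hvt : t ≤ v.val := Nat.not_lt.mp hv
      have key : ∀ w : Fin (m+n-6), c w = c v →
          t ≤ w.val ∧ (w.val - t)/(m-3) = (v.val - t)/(m-3) := by
        intro w hw
        rw [hcge v hvt] at hw
        simp only [hc] at hw
        by_cases h1 : w.val < t
        · rw [if_pos h1, Prod.mk.injEq] at hw
          exact absurd hw.2 (by simp)
        · rw [if_neg h1, Prod.mk.injEq] at hw
          exact ⟨Nat.not_lt.mp h1, hw.1⟩
      have h := Finset.card_le_card_of_injOn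
        (s := P v) (t := (Finset.univ : Finset (Fin (m-3))))
        (fun w => (⟨(w.val - t) % (m-3), Nat.mod_lt _ hm3⟩ : Fin (m-3)))
        (fun a _ => Finset.mem_univ _) ?_
      · rw [Finset.card_univ, Fintype.card_fin] at h
        omega
      · intro a ha b hb hab
        have ha' := key a ((memP v a).mp (Finset.mem_coe.mp ha))
        have hb' := key b ((memP v b).mp (Finset.mem_coe.mp hb))
        have hmod : (a.val - t) % (m-3) = (b.val - t) % (m-3) := congrArg Fin.val hab
        have ea := Nat.div_add_mod (a.val - t) (m-3)
        have eb := Nat.div_add_mod (b.val - t) (m-3)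
        rw [ha'.2] at ea
        rw [hb'.2] at eb
        have e1 : a.val = t + (a.val - t) := by omega
        have e2 : b.val = t + (b.val - t) := by omega
        exact Fin.ext (by rw [e1, e2, ← ea, ← eb, hmod])
  -- lower bound on part sizes
  have hPlow : ∀ v, m - 3 ≤ (P v).card := by
    intro v
    have htle : t ≤ m+n-6 := by omega
    by_cases hv : v.val < t
    · have hq : v.val/(m-2) < 2*k+b-m := by
        rw [Nat.div_lt_iff_lt_mul hm2, ← ht]
        exact hv
      have hqt : (v.val/(m-2))*(m-2) + (m-2) ≤ t := by
        have h2 : (v.val/(m-2)+1)*(m-2) ≤ (2*k+b-m)*(m-2) :=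
          Nat.mul_le_mul_right _ hq
        rw [Nat.succ_mul] at h2
        rw [ht]
        exact h2
      have h := Finset.card_le_card_of_injOn
        (s := (Finset.univ : Finset (Fin (m-2)))) (t := P v)
        (fun i => (⟨(v.val/(m-2))*(m-2) + i.1, by
          have := i.isLt; omega⟩ : Fin (m+n-6))) ?_ ?_
      · rw [Finset.card_univ, Fintype.card_fin] at h
        omega
      · intro i _
        simp only [Finset.mem_coe]
        rw [memP]
        have hi := i.isLt
        have hlt : (v.val/(m-2))*(m-2) + i.1 < t := by omega
        have hdiv : ((v.val/(m-2))*(m-2) + i.1)/(m-2) = v.val/(m-2) := by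
          rw [mul_comm (v.val/(m-2)) (m-2), Nat.mul_add_div hm2,
            Nat.div_eq_of_lt hi, add_zero]
        rw [hclt _ hlt, hclt v hv]
        simp only [hdiv]
      · intro i _ j _ hij
        have := congrArg Fin.val hij
        simp only at this
        exact Fin.ext (by omega)
    · have hvt : t ≤ v.val := Nat.not_lt.mp hv
      have hvlt : v.val < m+n-6 := v.isLt
      have hq : (v.val - t)/(m-3) < m+2-b-k := by
        rw [Nat.div_lt_iff_lt_mul hm3]
        omega
      have hqt : t + ((v.val - t)/(m-3))*(m-3) + (m-3) ≤ m+n-6 := by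
        have h2 : ((v.val - t)/(m-3)+1)*(m-3) ≤ (m+2-b-k)*(m-3) :=
          Nat.mul_le_mul_right _ hq
        rw [Nat.succ_mul] at h2
        omega
      have h := Finset.card_le_card_of_injOn
        (s := (Finset.univ : Finset (Fin (m-3)))) (t := P v)
        (fun i => (⟨t + ((v.val - t)/(m-3))*(m-3) + i.1, by
          have := i.isLt; omega⟩ : Fin (m+n-6))) ?_ ?_
      · rw [Finset.card_univ, Fintype.card_fin] at h
        omega
      · intro i _
        simp only [Finset.mem_coe]
        rw [memP]
        have hi := i.isLt
        have hge : t ≤ t + ((v.val - t)/(m-3))*(m-3) + i.1 := by omega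
        have hsub : t + ((v.val - t)/(m-3))*(m-3) + i.1 - t
            = ((v.val - t)/(m-3))*(m-3) + i.1 := by omega
        have hdiv : (((v.val - t)/(m-3))*(m-3) + i.1)/(m-3) = (v.val - t)/(m-3) := by
          rw [mul_comm ((v.val - t)/(m-3)) (m-3), Nat.mul_add_div hm3,
            Nat.div_eq_of_lt hi, add_zero]
        rw [hcge _ hge, hcge v hvt]
        simp only [hsub, hdiv]
      · intro i _ j _ hij
        have := congrArg Fin.val hij
        simp only at this
        exact Fin.ext (by omega)
  -- Part 2 : no connected graph on m vertices embeds in G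
  have part2 : ∀ H : SimpleGraph (Fin m), H.Connected → ¬ Contains G H := by
    rintro H hconn ⟨f, hf⟩
    have step : ∀ x y, H.Adj x y → c (f x) = c (f y) :=
      fun x y h => ((adj_iff _ _).mp (hf x y h)).2
    have hcf : ∀ x y : Fin m, c (f x) = c (f y) := by
      intro x y
      obtain ⟨p⟩ := hconn.preconnected x y
      induction p with
      | nil => rfl
      | cons h p ih => exact (step _ _ h).trans ih
    have v0 : Fin m := ⟨0, by omega⟩
    have hsub : m ≤ (P (f v0)).card := by
      have h := Finset.card_le_card_of_injOn
        (s := (Finset.univ : Finset (Fin m))) (t := P (f v0))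
        (fun a => f a)
        (fun a _ => (memP _ _).mpr (hcf a v0))
        (fun a _ b _ hab => f.injective hab)
      rwa [Finset.card_univ, Fintype.card_fin] at h
    have := hPhigh (f v0)
    omega
  -- Part 3 : the complement has maximum degree ≤ n - 3
  have part3 : ∀ v, (Gᶜ.neighborSet v).ncard ≤ n - 3 := by
    intro v
    have hsub : Gᶜ.neighborSet v ⊆ ↑(Finset.univ \ P v) := by
      intro w hw
      have hadj : Gᶜ.Adj v w := hw
      rw [SimpleGraph.compl_adj] at hadj
      have hcw : w ∉ P v := by
        rw [memP]
        intro hcw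
        exact hadj.2 ((adj_iff v w).mpr ⟨hadj.1, hcw.symm⟩)
      exact Finset.mem_coe.mpr (Finset.mem_sdiff.mpr ⟨Finset.mem_univ _, hcw⟩)
    have h1 := Set.ncard_le_ncard hsub (Finset.finite_toSet _)
    rw [Set.ncard_coe_finset] at h1
    have h2 : (Finset.univ \ P v).card = (m+n-6) - (P v).card := by
      rw [Finset.card_sdiff_of_subset (Finset.subset_univ _), Finset.card_univ, Fintype.card_fin]
    have h3 := hPlow v
    omega
  -- the complement does not contain Tstar n
  have noT : ¬ Contains Gᶜ (Tstar n) := by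
    rintro ⟨f, hf⟩
    have hTadj1 : ∀ i : ℕ, ∀ _ : 1 ≤ i, ∀ _ : i ≤ n - 3,
        (Tstar n).Adj ⟨0, by omega⟩ ⟨i, by omega⟩ := by
      intro i h1 h2
      simp only [Tstar, SimpleGraph.fromRel_adj]
      refine ⟨?_, Or.inl (Or.inl ⟨trivial, h1, h2⟩)⟩
      intro hEq
      rw [Fin.mk.injEq] at hEq
      omega
    have hTadj2 : (Tstar n).Adj ⟨n-2, by omega⟩ ⟨n-1, by omega⟩ := by
      simp only [Tstar, SimpleGraph.fromRel_adj]
      refine ⟨?_, Or.inl (Or.inr (Or.inr ⟨trivial, trivial⟩))⟩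
      intro hEq
      rw [Fin.mk.injEq] at hEq
      omega
    have hcomp : ∀ x y, Gᶜ.Adj x y → c x ≠ c y := by
      intro x y hxy hcxy
      rw [SimpleGraph.compl_adj] at hxy
      exact hxy.2 ((adj_iff x y).mpr ⟨hxy.1, hcxy⟩)
    have u : Fin (m+n-6) := f ⟨0, by omega⟩
    have hScard : (Finset.univ \ P (f ⟨0, by omega⟩)).card ≤ n - 3 := by
      rw [Finset.card_sdiff_of_subset (Finset.subset_univ _), Finset.card_univ, Fintype.card_fin]
      have := hPlow (f ⟨0, by omega⟩)
      omega
    obtain ⟨g, hg⟩ : ∃ g : Fin (n-3) → Fin (m+n-6),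
        g = fun i => f ⟨i.1+1, by have := i.isLt; omega⟩ := ⟨_, rfl⟩
    have hgmem : ∀ i, g i ∈ Finset.univ \ P (f ⟨0, by omega⟩) := by
      intro i
      have hi := i.isLt
      have hadj := hf _ _ (hTadj1 (i.1+1) (by omega) (by omega))
      refine Finset.mem_sdiff.mpr ⟨Finset.mem_univ _, ?_⟩
      rw [hg, memP]
      exact fun h => (hcomp _ _ hadj) h.symm
    have hginj : Function.Injective g := by
      intro i j hij
      rw [hg] at hij
      have h2 := congrArg Fin.val (f.injective hij)
      simp only at h2
      exact Fin.ext (by omega)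
    have himg : (Finset.image g Finset.univ).card = n - 3 := by
      rw [Finset.card_image_of_injective _ hginj, Finset.card_univ, Fintype.card_fin]
    have himgsub : Finset.image g Finset.univ ⊆ Finset.univ \ P (f ⟨0, by omega⟩) := by
      intro x hx
      obtain ⟨i, -, rfl⟩ := Finset.mem_image.mp hx
      exact hgmem i
    have key : ∀ j : Fin n, (j.1 = n-2 ∨ j.1 = n-1) → c (f j) = c (f ⟨0, by omega⟩) := by
      intro j hj
      by_contra hne
      have hjS : f j ∈ Finset.univ \ P (f ⟨0, by omega⟩) :=
        Finset.mem_sdiff.mpr ⟨Finset.mem_univ _, by rw [memP]; exact hne⟩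
      have hjnot : f j ∉ Finset.image g Finset.univ := by
        intro hmem
        obtain ⟨i, -, hi⟩ := Finset.mem_image.mp hmem
        rw [hg] at hi
        have h2 := congrArg Fin.val (f.injective hi)
        simp only at h2
        have hi3 := i.isLt
        omega
      have hcard : (insert (f j) (Finset.image g Finset.univ)).card
          ≤ (Finset.univ \ P (f ⟨0, by omega⟩)).card :=
        Finset.card_le_card (Finset.insert_subset hjS himgsub)
      rw [Finset.card_insert_of_notMem hjnot, himg] at hcard
      omega
    have h2 := key ⟨n-2, by omega⟩ (Or.inl rfl)
    have h1 := key ⟨n-1, by omega⟩ (Or.inr rfl)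
    exact hcomp _ _ (hf _ _ hTadj2) (h2.trans h1.symm)
  -- Part 4 : the Ramsey lower bound
  have part4 : ∀ Gm : SimpleGraph (Fin m), Gm.Connected → m + n - 6 < ramsey Gm (Tstar n) := by
    intro Gm hGm
    obtain ⟨N0, hN0pos, hN0⟩ := ramsey_set_nonempty Gm (Tstar n)
    have hne : {N | 0 < N ∧ ∀ Gg : SimpleGraph (Fin N),
        Contains Gg Gm ∨ Contains Ggᶜ (Tstar n)}.Nonempty := ⟨N0, hN0pos, hN0⟩
    have hmem : ramsey Gm (Tstar n) ∈ {N | 0 < N ∧ ∀ Gg : SimpleGraph (Fin N),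
        Contains Gg Gm ∨ Contains Ggᶜ (Tstar n)} := Nat.sInf_mem hne
    obtain ⟨hpos, hprop⟩ := hmem
    by_contra hcon
    push_neg at hcon
    have hle : ramsey Gm (Tstar n) ≤ m + n - 6 := hcon
    set NN := ramsey Gm (Tstar n) with hNN
    have e : Fin NN → Fin (m+n-6) := fun i => ⟨i.1, lt_of_lt_of_le i.isLt hle⟩
    have einj : Function.Injective (fun i : Fin NN =>
        (⟨i.1, lt_of_lt_of_le i.isLt hle⟩ : Fin (m+n-6))) := by
      intro a b hab
      have := congrArg Fin.val hab
      simp only at this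
      exact Fin.ext this
    rcases hprop (SimpleGraph.comap
        (fun i : Fin NN => (⟨i.1, lt_of_lt_of_le i.isLt hle⟩ : Fin (m+n-6))) G)
      with ⟨f, hf⟩ | ⟨f, hf⟩
    · refine part2 Gm hGm ⟨⟨fun i => ⟨(f i).1, lt_of_lt_of_le (f i).isLt hle⟩,
        fun a b hab => f.injective (einj hab)⟩, ?_⟩
      intro a b hab
      have := hf a b hab
      rwa [SimpleGraph.comap_adj] at this
    · refine noT ⟨⟨fun i => ⟨(f i).1, lt_of_lt_of_le (f i).isLt hle⟩,
        fun a b hab => f.injective (einj hab)⟩, ?_⟩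
      intro a b hab
      have h2 := hf a b hab
      rw [SimpleGraph.compl_adj] at h2 ⊢
      refine ⟨fun hh => h2.1 (einj hh), fun hGadj => h2.2 ?_⟩
      rwa [SimpleGraph.comap_adj]
  exact ⟨part1, part2, part3, part4⟩
end
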